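/- Let d ≥ 1, let h : {−1,1}^d → ℝ satisfy 0 ≤ h(y) ≤ d for all y, let M ≥ 2d, and define f(x) = min(M, h(round(x)) + 2M·g(x)). Then: (a) f(y) = h(y) for every hypercube vertex y ∈ {−1,1}^d; (b) f(x) ≥ h(round(x)) for every x ∈ ℝ^d; (c) for any R ≥ √d, the minimum of f over the closed ball B_d(0,R) equals the minimum of h over {−1,1}^d; and (d) if x ∈ B_d(0,R) satisfies f(x) ≤ min f + ε for some ε ≥ 0, then h(round(x)) ≤ min h + ε, i.e., round(x) is an ε-minimizer of h. -/

import Mathlib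

open Real MeasureTheory

/-- The coordinatewise sign vector: `round(x)_i = 1` if `x_i ≥ 0` and `-1` otherwise. -/
noncomputable def rnd {d : ℕ} (x : EuclideanSpace ℝ (Fin d)) : EuclideanSpace ℝ (Fin d) :=
  WithLp.toLp 2 fun i => if 0 ≤ x i then 1 else -1

/-- The continuous extension `f(x) = min(M, h(round x) + 2M·‖x - round x‖)` of a
function `h` on the hypercube vertices. -/
noncomputable def fExt {d : ℕ} (h : EuclideanSpace ℝ (Fin d) → ℝ) (M : ℝ)
    (x : EuclideanSpace ℝ (Fin d)) : ℝ :=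
  min M (h (rnd x) + 2 * M * ‖x - rnd x‖)

/-- For `0 ≤ h ≤ d` on the hypercube and `M ≥ 2d`:
(a) `f = h` on hypercube vertices; (b) `f x ≥ h (round x)` everywhere;
(c) for `R ≥ √d`, the minimum of `f` over `B(0,R)` equals the minimum of `h` over
the hypercube; (d) any `ε`-minimizer `x` of `f` over `B(0,R)` rounds to an
`ε`-minimizer of `h`. -/
theorem extension_optimization_equivalence (d : ℕ) (hd : 1 ≤ d)
    (h : EuclideanSpace ℝ (Fin d) → ℝ)
    (hh : ∀ y : EuclideanSpace ℝ (Fin d), (∀ i, y i = 1 ∨ y i = -1) →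
      0 ≤ h y ∧ h y ≤ (d : ℝ))
    (M : ℝ) (hM : 2 * (d : ℝ) ≤ M) :
    (∀ y : EuclideanSpace ℝ (Fin d), (∀ i, y i = 1 ∨ y i = -1) → fExt h M y = h y) ∧
    (∀ x : EuclideanSpace ℝ (Fin d), h (rnd x) ≤ fExt h M x) ∧
    (∀ R : ℝ, Real.sqrt d ≤ R →
      sInf (fExt h M '' Metric.closedBall (0 : EuclideanSpace ℝ (Fin d)) R) =
        sInf (h '' {y : EuclideanSpace ℝ (Fin d) | ∀ i, y i = 1 ∨ y i = -1})) ∧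
    (∀ R : ℝ, Real.sqrt d ≤ R → ∀ ε : ℝ, 0 ≤ ε →
      ∀ x ∈ Metric.closedBall (0 : EuclideanSpace ℝ (Fin d)) R,
        fExt h M x ≤
          sInf (fExt h M '' Metric.closedBall (0 : EuclideanSpace ℝ (Fin d)) R) + ε →
        h (rnd x) ≤
          sInf (h '' {y : EuclideanSpace ℝ (Fin d) | ∀ i, y i = 1 ∨ y i = -1}) + ε) := by
  have hd1 : (1:ℝ) ≤ d := by exact_mod_cast hd
  have hMd : (d:ℝ) ≤ M := by linarith
  have hM0 : (0:ℝ) < M := by linarith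
  have hrndV : ∀ x : EuclideanSpace ℝ (Fin d), ∀ i, rnd x i = 1 ∨ rnd x i = -1 := by
    intro x i
    by_cases hx : 0 ≤ x i
    · left; simp [rnd, hx]
    · right; simp [rnd, hx]
  have hrnd_fix : ∀ y : EuclideanSpace ℝ (Fin d), (∀ i, y i = 1 ∨ y i = -1) → rnd y = y := by
    intro y hy; ext i
    rcases hy i with h1 | h1 <;> simp [rnd, h1] <;> norm_num
  have ha : ∀ y : EuclideanSpace ℝ (Fin d), (∀ i, y i = 1 ∨ y i = -1) → fExt h M y = h y := by
    intro y hy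
    rw [fExt, hrnd_fix y hy, sub_self, norm_zero, mul_zero, add_zero]
    exact min_eq_right ((hh y hy).2.trans hMd)
  have hb : ∀ x : EuclideanSpace ℝ (Fin d), h (rnd x) ≤ fExt h M x := by
    intro x
    have hle : h (rnd x) ≤ (d:ℝ) := (hh _ (hrndV x)).2
    have h0 : 0 ≤ h (rnd x) := (hh _ (hrndV x)).1
    rw [fExt]
    rcases le_total M (h (rnd x) + 2*M*‖x - rnd x‖) with hc | hc
    · rw [min_eq_left hc]; linarith
    · rw [min_eq_right hc]; nlinarith [norm_nonneg (x - rnd x)]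
  have hnorm : ∀ y : EuclideanSpace ℝ (Fin d), (∀ i, y i = 1 ∨ y i = -1) →
      ‖y‖ = Real.sqrt d := by
    intro y hy
    rw [EuclideanSpace.norm_eq]
    congr 1
    have hone : ∀ i, ‖y i‖^2 = 1 := by
      intro i; rcases hy i with h1 | h1 <;> simp [h1]
    have hone' : ∀ i, (y i)^2 = 1 := by
      intro i; have := hone i; rwa [Real.norm_eq_abs, sq_abs] at this
    simp [hone']
  set S := {y : EuclideanSpace ℝ (Fin d) | ∀ i, y i = 1 ∨ y i = -1} with hS
  have hy0 : (WithLp.toLp 2 (fun _ => (1:ℝ)) : EuclideanSpace ℝ (Fin d)) ∈ S := fun i => Or.inl rfl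
  have hVne : (h '' S).Nonempty := ⟨h _, _, hy0, rfl⟩
  have hVbdd : BddBelow (h '' S) := by
    refine ⟨0, ?_⟩
    rintro v ⟨y, hy, rfl⟩
    exact (hh y hy).1
  have hc : ∀ R : ℝ, Real.sqrt d ≤ R →
      sInf (fExt h M '' Metric.closedBall (0 : EuclideanSpace ℝ (Fin d)) R) =
        sInf (h '' S) := by
    intro R hR
    have hlow : ∀ z ∈ fExt h M '' Metric.closedBall (0 : EuclideanSpace ℝ (Fin d)) R,
        sInf (h '' S) ≤ z := by
      rintro z ⟨x, hx, rfl⟩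
      exact le_trans (csInf_le hVbdd ⟨rnd x, hrndV x, rfl⟩) (hb x)
    have hFbdd : BddBelow (fExt h M '' Metric.closedBall (0 : EuclideanSpace ℝ (Fin d)) R) :=
      ⟨sInf (h '' S), hlow⟩
    have hmemB : ∀ y : EuclideanSpace ℝ (Fin d), y ∈ S →
        y ∈ Metric.closedBall (0 : EuclideanSpace ℝ (Fin d)) R := by
      intro y hy
      rw [Metric.mem_closedBall, dist_zero_right, hnorm y hy]
      exact hR
    have hFne : (fExt h M '' Metric.closedBall (0 : EuclideanSpace ℝ (Fin d)) R).Nonempty :=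
      ⟨fExt h M _, _, hmemB _ hy0, rfl⟩
    apply le_antisymm
    · apply le_csInf hVne
      rintro v ⟨y, hy, rfl⟩
      calc sInf (fExt h M '' Metric.closedBall (0 : EuclideanSpace ℝ (Fin d)) R)
          ≤ fExt h M y := csInf_le hFbdd ⟨y, hmemB y hy, rfl⟩
        _ = h y := ha y hy
    · exact le_csInf hFne hlow
  refine ⟨ha, hb, hc, ?_⟩
  intro R hR ε hε x hx hfx
  calc h (rnd x) ≤ fExt h M x := hb x
    _ ≤ sInf (fExt h M '' Metric.closedBall (0 : EuclideanSpace ℝ (Fin d)) R) + ε := hfx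
    _ = sInf (h '' S) + ε := by rw [hc R hR]
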